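/- Let C be a finite alphabet and Γ a finite directed graph with edges labeled by elements of C which is left-resolving (for each vertex, incoming edges have distinct labels). For each vertex v let F_v ⊆ C^{-ω} be the set of left-infinite label sequences readable along left-infinite paths ending at v, and let μ be the uniform Bernoulli measure on C^{-ω}. Then for every vertex v, μ(F_v) = (1/|C|) · Σ_{e : u → v} μ(F_u), where the sum is over incoming edges of v. Equivalently, the vector (μ(F_v))_v is a left eigenvector of the adjacency matrix of Γ with eigenvalue |C|, provided it is nonzero. -/
import Mathlib


open MeasureTheory

/-- The set of left-infinite label sequences readable along left-infinite paths
ending at `v` (the sequence `x` is `…x₂x₁` with `x 0 = x₁`). -/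
def pathSet {V C : Type*} (e : V → C → V → Prop) (v : V) : Set (ℕ → C) :=
  {x | ∃ p : ℕ → V, p 0 = v ∧ ∀ k, e (p (k + 1)) (x k) (p k)}

namespace Stmt8Aux

open Classical

variable {V C : Type*} [Fintype V] [Fintype C] [Nonempty C]

/-- Finite approximation of `pathSet`: paths of length `m`. -/
def S (e : V → C → V → Prop) (m : ℕ) (v : V) : Set (ℕ → C) :=
  {x | ∃ p : ℕ → V, p 0 = v ∧ ∀ k < m, e (p (k + 1)) (x k) (p k)}

/-- Words of length `m` readable along paths ending at `v`. -/
noncomputable def W (e : V → C → V → Prop) (m : ℕ) (v : V) : Finset (Fin m → C) :=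
  Finset.univ.filter
    (fun w => ∃ p : ℕ → V, p 0 = v ∧ ∀ k : Fin m, e (p ((k : ℕ) + 1)) (w k) (p (k : ℕ)))

lemma mem_S_iff (e : V → C → V → Prop) (m : ℕ) (v : V) (x : ℕ → C) :
    x ∈ S e m v ↔ ∃ y ∈ W e m v, ∀ i : Fin m, x (i : ℕ) = y i := by
  constructor
  · rintro ⟨p, hp0, hp⟩
    refine ⟨fun i => x (i : ℕ), ?_, fun i => rfl⟩
    exact Finset.mem_filter.2 ⟨Finset.mem_univ _, ⟨p, hp0, fun k => hp _ k.isLt⟩⟩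
  · rintro ⟨y, hy, hxy⟩
    obtain ⟨p, hp0, hp⟩ := (Finset.mem_filter.1 hy).2
    refine ⟨p, hp0, fun k hk => ?_⟩
    have := hp ⟨k, hk⟩
    simpa [hxy ⟨k, hk⟩] using this

lemma S_antitone (e : V → C → V → Prop) (v : V) : Antitone (fun m => S e m v) := by
  intro m n hmn x hx
  obtain ⟨p, hp0, hp⟩ := hx
  exact ⟨p, hp0, fun k hk => hp k (lt_of_lt_of_le hk hmn)⟩

/-- König's lemma: the infinite path set is the intersection of the finite approximations. -/
lemma pathSet_eq_iInter (e : V → C → V → Prop) (v : V) :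
    pathSet e v = ⋂ m, S e m v := by
  ext x
  constructor
  · rintro ⟨p, hp0, hp⟩
    exact Set.mem_iInter.2 fun m => ⟨p, hp0, fun k _ => hp k⟩
  · intro hx
    letI : TopologicalSpace V := ⊥
    haveI : DiscreteTopology V := ⟨rfl⟩
    set T : ℕ → Set (ℕ → V) :=
      fun m => {p | p 0 = v ∧ ∀ k < m, e (p (k + 1)) (x k) (p k)} with hT
    have hTsub : ∀ m, T (m + 1) ⊆ T m := by
      rintro m p ⟨h0, h⟩
      exact ⟨h0, fun k hk => h k (Nat.lt_succ_of_lt hk)⟩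
    have hTne : ∀ m, (T m).Nonempty := by
      intro m
      obtain ⟨p, hp0, hp⟩ := Set.mem_iInter.1 hx m
      exact ⟨p, hp0, hp⟩
    have hTclosed : ∀ m, IsClosed (T m) := by
      intro m
      have h1 : IsClosed {p : ℕ → V | p 0 = v} := by
        have : {p : ℕ → V | p 0 = v} = (fun p : ℕ → V => p 0) ⁻¹' {v} := rfl
        rw [this]
        exact IsClosed.preimage (continuous_apply 0) (isClosed_discrete _)
      have h2 : ∀ k, IsClosed {p : ℕ → V | e (p (k + 1)) (x k) (p k)} := by
        intro k
        have : {p : ℕ → V | e (p (k + 1)) (x k) (p k)} =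
            (fun p : ℕ → V => (p (k + 1), p k)) ⁻¹' {q : V × V | e q.1 (x k) q.2} := rfl
        rw [this]
        exact IsClosed.preimage ((continuous_apply _).prodMk (continuous_apply _))
          (isClosed_discrete _)
      have : T m = {p : ℕ → V | p 0 = v} ∩ ⋂ k ∈ Finset.range m,
          {p : ℕ → V | e (p (k + 1)) (x k) (p k)} := by
        ext p
        simp only [hT, Set.mem_setOf_eq, Set.mem_inter_iff, Set.mem_iInter,
          Finset.mem_range]
      rw [this]
      exact h1.inter (isClosed_biInter fun k _ => h2 k)
    obtain ⟨p, hp⟩ :=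
      IsCompact.nonempty_iInter_of_sequence_nonempty_isCompact_isClosed T hTsub hTne
        ((hTclosed 0).isCompact) hTclosed
    have hp' : ∀ m, p ∈ T m := Set.mem_iInter.1 hp
    refine ⟨p, (hp' 0).1, fun k => ?_⟩
    exact (hp' (k + 1)).2 k (Nat.lt_succ_self k)

section Measure

variable [MeasurableSpace C] [MeasurableSingletonClass C]

lemma measure_S (e : V → C → V → Prop) (μ : Measure (ℕ → C))
    (hμ : ∀ (m : ℕ) (y : Fin m → C),
      μ {f | ∀ i : Fin m, f (i : ℕ) = y i} = ((Fintype.card C : ENNReal))⁻¹ ^ m)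
    (m : ℕ) (v : V) :
    μ (S e m v) = (W e m v).card * ((Fintype.card C : ENNReal))⁻¹ ^ m := by
  have hcyl_meas : ∀ y : Fin m → C,
      MeasurableSet {f : ℕ → C | ∀ i : Fin m, f (i : ℕ) = y i} := by
    intro y
    have : {f : ℕ → C | ∀ i : Fin m, f (i : ℕ) = y i} =
        ⋂ i : Fin m, (fun f : ℕ → C => f (i : ℕ)) ⁻¹' {y i} := by
      ext f; simp [Set.mem_iInter]
    rw [this]
    exact MeasurableSet.iInter fun i =>
      (measurable_pi_apply _) (measurableSet_singleton _)
  have hset : S e m v = ⋃ y ∈ W e m v, {f : ℕ → C | ∀ i : Fin m, f (i : ℕ) = y i} := by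
    ext x
    simp only [Set.mem_iUnion, Set.mem_setOf_eq, exists_prop]
    exact mem_S_iff e m v x
  rw [hset, measure_biUnion_finset ?_ (fun y _ => hcyl_meas y)]
  · simp only [hμ m, Finset.sum_const, nsmul_eq_mul]
  · intro y hy z hz hyz
    refine Set.disjoint_left.2 fun f hf hf' => hyz ?_
    funext i
    exact (hf i).symm.trans (hf' i)

lemma card_W_succ (e : V → C → V → Prop)
    (hlr : ∀ ⦃u u' : V⦄ ⦃c : C⦄ ⦃v : V⦄, e u c v → e u' c v → u = u') (m : ℕ) (v : V) :
    (W e (m + 1) v).card = ∑ u : V, ∑ c : C, if e u c v then (W e m u).card else 0 := by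
  rw [Finset.sum_comm]
  rw [Finset.card_eq_sum_card_fiberwise
    (f := fun w : Fin (m + 1) → C => w 0) (t := Finset.univ) (fun x _ => Finset.mem_univ _)]
  refine Finset.sum_congr rfl fun c _ => ?_
  by_cases h : ∃ u, e u c v
  · obtain ⟨u0, hu0⟩ := h
    rw [Finset.sum_eq_single u0 (fun u _ hu => if_neg fun h' => hu (hlr h' hu0))
      (fun hu => absurd (Finset.mem_univ u0) hu), if_pos hu0]
    refine Finset.card_bij (fun w _ => Fin.tail w) ?_ ?_ ?_
    · intro w hw
      obtain ⟨hwW, hw0⟩ := Finset.mem_filter.1 hw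
      obtain ⟨p, hp0, hp⟩ := (Finset.mem_filter.1 hwW).2
      have h1 : e (p 1) c v := by
        have := hp 0
        simpa [hp0, hw0] using this
      have hp1 : p 1 = u0 := hlr h1 hu0
      refine Finset.mem_filter.2 ⟨Finset.mem_univ _, ⟨fun k => p (k + 1), hp1, fun k => ?_⟩⟩
      have := hp k.succ
      simpa [Fin.tail] using this
    · intro w₁ hw₁ w₂ hw₂ htail
      have h1 : w₁ 0 = c := (Finset.mem_filter.1 hw₁).2
      have h2 : w₂ 0 = c := (Finset.mem_filter.1 hw₂).2
      funext i
      refine Fin.cases ?_ ?_ i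
      · rw [h1, h2]
      · intro j
        exact congrFun htail j
    · intro t ht
      obtain ⟨q, hq0, hq⟩ := (Finset.mem_filter.1 ht).2
      set p : ℕ → V := fun k => match k with | 0 => v | (k + 1) => q k with hpdef
      have hmem : (Fin.cons c t : Fin (m + 1) → C) ∈ W e (m + 1) v := by
        refine Finset.mem_filter.2 ⟨Finset.mem_univ _, ⟨p, rfl, fun k => ?_⟩⟩
        refine Fin.cases ?_ ?_ k
        · show e (q 0) c v
          rw [hq0]; exact hu0
        · intro j
          exact hq j
      have hmem2 : (Fin.cons c t : Fin (m + 1) → C) ∈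
          Finset.filter (fun w => w 0 = c) (W e (m + 1) v) :=
        Finset.mem_filter.2 ⟨hmem, by simp⟩
      exact ⟨Fin.cons c t, hmem2, by simp [Fin.tail_cons]⟩
  · rw [Finset.sum_eq_zero fun u _ => if_neg fun h' => h ⟨u, h'⟩]
    rw [Finset.card_eq_zero, Finset.eq_empty_iff_forall_notMem]
    intro w hw
    obtain ⟨hwW, hw0⟩ := Finset.mem_filter.1 hw
    obtain ⟨p, hp0, hp⟩ := (Finset.mem_filter.1 hwW).2
    refine h ⟨p 1, ?_⟩
    have := hp 0
    simpa [hp0, hw0] using this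

lemma measurableSet_S (e : V → C → V → Prop) (m : ℕ) (v : V) :
    MeasurableSet (S e m v) := by
  have hset : S e m v = ⋃ y ∈ W e m v, {f : ℕ → C | ∀ i : Fin m, f (i : ℕ) = y i} := by
    ext x
    simp only [Set.mem_iUnion, Set.mem_setOf_eq, exists_prop]
    exact mem_S_iff e m v x
  rw [hset]
  refine MeasurableSet.biUnion (Finset.countable_toSet _) fun y _ => ?_
  have : {f : ℕ → C | ∀ i : Fin m, f (i : ℕ) = y i} =
      ⋂ i : Fin m, (fun f : ℕ → C => f (i : ℕ)) ⁻¹' {y i} := by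
    ext f; simp [Set.mem_iInter]
  rw [this]
  exact MeasurableSet.iInter fun i =>
    (measurable_pi_apply _) (measurableSet_singleton _)

end Measure

end Stmt8Aux

open Classical in
/-- for a left-resolving finite labeled graph and the uniform Bernoulli
measure `μ`, one has `μ(F_v) = |C|⁻¹ · Σ_{edges u →ᶜ v} μ(F_u)`. -/
theorem stmt8 {V C : Type*} [Fintype V] [Fintype C] [Nonempty C]
    [MeasurableSpace C] [MeasurableSingletonClass C]
    (e : V → C → V → Prop)
    (hlr : ∀ ⦃u u' : V⦄ ⦃c : C⦄ ⦃v : V⦄, e u c v → e u' c v → u = u')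
    (μ : Measure (ℕ → C))
    (hμ : ∀ (m : ℕ) (y : Fin m → C),
      μ {f | ∀ i : Fin m, f (i : ℕ) = y i} = ((Fintype.card C : ENNReal))⁻¹ ^ m) :
    ∀ v : V, μ (pathSet e v) =
      ((Fintype.card C : ENNReal))⁻¹ *
        ∑ u : V, ∑ c : C, if e u c v then μ (pathSet e u) else 0 := by
  intro v
  set r : ENNReal := ((Fintype.card C : ENNReal))⁻¹ with hr
  have hcard : (Fintype.card C : ENNReal) ≠ 0 := by
    simp [Fintype.card_ne_zero]
  have hrtop : r ≠ ⊤ := ENNReal.inv_ne_top.2 hcard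
  have hμuniv : μ Set.univ = 1 := by
    have := hμ 0 (fun i => i.elim0)
    simpa using this
  have hfin : ∀ s : Set (ℕ → C), μ s ≠ ⊤ := fun s => by
    refine ne_top_of_le_ne_top ?_ (measure_mono (Set.subset_univ s))
    rw [hμuniv]; exact ENNReal.one_ne_top
  -- limit of finite approximations
  have hlim : ∀ u : V, Filter.Tendsto (fun m => μ (Stmt8Aux.S e m u)) Filter.atTop
      (nhds (μ (pathSet e u))) := by
    intro u
    rw [Stmt8Aux.pathSet_eq_iInter e u]
    exact tendsto_measure_iInter_atTop (fun m => (Stmt8Aux.measurableSet_S e m u).nullMeasurableSet)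
      (Stmt8Aux.S_antitone e u) ⟨0, hfin _⟩
  -- recursion at finite level
  have hrec : ∀ m : ℕ, μ (Stmt8Aux.S e (m + 1) v) =
      r * ∑ u : V, ∑ c : C, if e u c v then μ (Stmt8Aux.S e m u) else 0 := by
    intro m
    rw [Stmt8Aux.measure_S e μ hμ, Stmt8Aux.card_W_succ e hlr m v]
    push_cast
    rw [Finset.mul_sum, Finset.sum_mul]
    refine Finset.sum_congr rfl fun u _ => ?_
    rw [Finset.mul_sum, Finset.sum_mul]
    refine Finset.sum_congr rfl fun c _ => ?_
    by_cases h : e u c v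
    · rw [if_pos h, if_pos h, Stmt8Aux.measure_S e μ hμ]
      ring
    · simp [if_neg h]
  -- pass to the limit
  have h1 : Filter.Tendsto (fun m => μ (Stmt8Aux.S e (m + 1) v)) Filter.atTop
      (nhds (μ (pathSet e v))) :=
    (hlim v).comp (Filter.tendsto_add_atTop_nat 1)
  have h2 : Filter.Tendsto
      (fun m => r * ∑ u : V, ∑ c : C, if e u c v then μ (Stmt8Aux.S e m u) else 0)
      Filter.atTop
      (nhds (r * ∑ u : V, ∑ c : C, if e u c v then μ (pathSet e u) else 0)) := by
    refine ENNReal.Tendsto.const_mul ?_ (Or.inr hrtop)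
    refine tendsto_finset_sum _ fun u _ => ?_
    refine tendsto_finset_sum _ fun c _ => ?_
    by_cases h : e u c v
    · simpa [if_pos h] using hlim u
    · simpa [if_neg h] using tendsto_const_nhds
  have := tendsto_nhds_unique (h1.congr fun m => hrec m) h2
  exact this
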